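/- In the dynamic programming dominance rule, if two states with the same position index pos satisfy f' ≤ f'' and C'_max ≤ C''_max, then for every extension of the dominated state (f'', C''_max, pos) to a complete schedule there is a corresponding extension of (f', C'_max, pos) with objective value at most as large, for any regular (nondecreasing in completion times) objective function. -/
import Mathlib


/-- Completion times of jobs appended, in order, after a partial schedule with
makespan `C`: each job starts at the maximum of its release date and the
previous completion time (initially `C`). -/
def compList {α : Type*} (p : ℝ) (r : α → ℝ) : ℝ → List α → List ℝ
  | _, [] => []
  | C, a :: t => (max (r a) C + p) :: compList p r (max (r a) C + p) t


lemma compList_mono {α : Type*} (p : ℝ) (r : α → ℝ) :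
    ∀ (L : List α) {C C' : ℝ}, C ≤ C' →
      List.Forall₂ (· ≤ ·) (compList p r C L) (compList p r C' L)
  | [], _, _, _ => List.Forall₂.nil
  | a :: t, C, C', h => by
      have hm : max (r a) C + p ≤ max (r a) C' + p := by
        gcongr
      exact List.Forall₂.cons hm (compList_mono p r t hm)

/-- Dominance rule: if two states with the same position satisfy `f' ≤ f''`
and `C'ₘₐₓ ≤ C''ₘₐₓ`, then for every feasible extension of the dominated state
`(f'', C''ₘₐₓ, pos)` by the remaining jobs there is a feasible extension of
`(f', C'ₘₐₓ, pos)` (a rearrangement of the same remaining jobs) whose total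
objective value is at most as large, for any regular objective. -/
theorem dominance_rule {α : Type*} (p : ℝ) (hp : 0 < p) (r : α → ℝ)
    (F : List ℝ → ℝ)
    (hreg : ∀ xs ys : List ℝ, List.Forall₂ (· ≤ ·) xs ys → F xs ≤ F ys)
    (Feas : List α → Prop)
    (f' f'' Cmax' Cmax'' : ℝ) (hf : f' ≤ f'') (hC : Cmax' ≤ Cmax'') :
    ∀ L'' : List α, Feas L'' →
      ∃ L' : List α, Feas L' ∧ L'.Perm L'' ∧
        f' + F (compList p r Cmax' L') ≤ f'' + F (compList p r Cmax'' L'') := by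
  intro L hL
  exact ⟨L, hL, List.Perm.refl L, add_le_add hf (hreg _ _ (compList_mono p r L hC))⟩
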